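/- arXiv:2006.12087 — 3 statements merged into one kernel-verified Lean document; each statement's English description precedes it below -/
import Mathlib

section
/- Let P and Q be probability measures on X × Y, let H be a set of measurable hypotheses h : X → Y, and let the loss L be nonnegative, bounded, symmetric, and satisfy the triangle inequality. Then for any h ∈ H and any h* ∈ H: R_Q(h) ≤ R_P(h) + disc_H(Q_X, P_X) + R_Q(h*) + R_P(h*), where P_X and Q_X are the marginals on X. -/
/-!
STATEMENT 4: For probability measures P, Q on X × Y, a set H of measurable hypotheses, and
a nonnegative, bounded, symmetric loss L satisfying the triangle inequality, for any
h ∈ H and h* ∈ H: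
R_Q(h) ≤ R_P(h) + disc_H(Q_X, P_X) + R_Q(h*) + R_P(h*).
-/

open MeasureTheory ProbabilityTheory

section Aux
variable {X : Type*} [MeasurableSpace X] {n : ℕ}

lemma aux_meas (L : Fin n → Fin n → ℝ) (f g : X → Fin n)
    (hf : Measurable f) (hg : Measurable g) :
    Measurable (fun x => L (f x) (g x)) :=
  (measurable_of_countable (fun q : Fin n × Fin n => L q.1 q.2)).comp (hf.prodMk hg)

lemma aux_integ {Z : Type*} [MeasurableSpace Z] (μ : Measure Z) [IsProbabilityMeasure μ]
    (f : Z → ℝ) (hf : Measurable f) (M : ℝ) (h0 : ∀ z, 0 ≤ f z) (h1 : ∀ z, f z ≤ M) :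
    Integrable f μ := by
  refine Integrable.mono' (integrable_const M) hf.aestronglyMeasurable ?_
  filter_upwards with z
  rw [Real.norm_eq_abs, abs_of_nonneg (h0 z)]
  exact h1 z

lemma aux_int_bounds {Z : Type*} [MeasurableSpace Z] (μ : Measure Z) [IsProbabilityMeasure μ]
    (f : Z → ℝ) (hf : Measurable f) (M : ℝ) (h0 : ∀ z, 0 ≤ f z) (h1 : ∀ z, f z ≤ M) :
    0 ≤ ∫ z, f z ∂μ ∧ ∫ z, f z ∂μ ≤ M := by
  constructor
  · exact integral_nonneg h0
  · calc ∫ z, f z ∂μ ≤ ∫ _, M ∂μ :=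
          integral_mono (aux_integ μ f hf M h0 h1) (integrable_const M) h1
      _ = M := by simp

end Aux

/-- Risk `R_μ(h) = E_{(x,y)∼μ} L(h(x), y)`. -/
noncomputable def risk {X : Type*} [MeasurableSpace X] {n : ℕ}
    (L : Fin n → Fin n → ℝ) (μ : Measure (X × Fin n)) (h : X → Fin n) : ℝ :=
  ∫ p, L (h p.1) p.2 ∂μ

/-- Discrepancy distance
`disc_H(ν, ν') = sup_{h,h'∈H} |E_{x∼ν} L(h(x), h'(x)) − E_{x∼ν'} L(h(x), h'(x))|`. -/
noncomputable def disc {X : Type*} [MeasurableSpace X] {n : ℕ}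
    (L : Fin n → Fin n → ℝ) (H : Set (X → Fin n)) (ν ν' : Measure X) : ℝ :=
  sSup { r | ∃ h ∈ H, ∃ h' ∈ H,
    r = |(∫ x, L (h x) (h' x) ∂ν) - ∫ x, L (h x) (h' x) ∂ν'| }

theorem target_risk_bound_via_ideal_hypothesis
    {X : Type*} [MeasurableSpace X] (C : ℕ) (hC : 1 ≤ C)
    (L : Fin (C + 1) → Fin (C + 1) → ℝ) (M : ℝ)
    (hL_nonneg : ∀ a b, 0 ≤ L a b) (hL_bdd : ∀ a b, L a b ≤ M)
    (hL_symm : ∀ a b, L a b = L b a)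
    (hL_tri : ∀ a b c, L a c ≤ L a b + L b c)
    (P Q : Measure (X × Fin (C + 1)))
    [IsProbabilityMeasure P] [IsProbabilityMeasure Q]
    (H : Set (X → Fin (C + 1))) (hH_meas : ∀ h ∈ H, Measurable h)
    (h : X → Fin (C + 1)) (hh : h ∈ H)
    (hstar : X → Fin (C + 1)) (hhstar : hstar ∈ H) :
    risk L Q h ≤ risk L P h + disc L H (Q.map Prod.fst) (P.map Prod.fst)
      + risk L Q hstar + risk L P hstar := by
  simp only [risk, disc]
  have hM : 0 ≤ M := le_trans (hL_nonneg 0 0) (hL_bdd 0 0)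
  have hmh := hH_meas h hh
  have hms := hH_meas hstar hhstar
  haveI : IsProbabilityMeasure (Q.map Prod.fst) :=
    Measure.isProbabilityMeasure_map measurable_fst.aemeasurable
  haveI : IsProbabilityMeasure (P.map Prod.fst) :=
    Measure.isProbabilityMeasure_map measurable_fst.aemeasurable
  -- measurable integrands on product space
  have mhh : Measurable (fun p : X × Fin (C+1) => L (h p.1) p.2) :=
    aux_meas L _ _ (hmh.comp measurable_fst) measurable_snd
  have mhs : Measurable (fun p : X × Fin (C+1) => L (hstar p.1) p.2) :=
    aux_meas L _ _ (hms.comp measurable_fst) measurable_snd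
  have mhhs : Measurable (fun p : X × Fin (C+1) => L (h p.1) (hstar p.1)) :=
    aux_meas L _ _ (hmh.comp measurable_fst) (hms.comp measurable_fst)
  have mx : Measurable (fun x => L (h x) (hstar x)) := aux_meas L _ _ hmh hms
  -- integrability
  have iQh := aux_integ Q _ mhh M (fun z => hL_nonneg _ _) (fun z => hL_bdd _ _)
  have iQs := aux_integ Q _ mhs M (fun z => hL_nonneg _ _) (fun z => hL_bdd _ _)
  have iPh := aux_integ P _ mhh M (fun z => hL_nonneg _ _) (fun z => hL_bdd _ _)
  have iPs := aux_integ P _ mhs M (fun z => hL_nonneg _ _) (fun z => hL_bdd _ _)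
  have iQhs := aux_integ Q _ mhhs M (fun z => hL_nonneg _ _) (fun z => hL_bdd _ _)
  have iPhs := aux_integ P _ mhhs M (fun z => hL_nonneg _ _) (fun z => hL_bdd _ _)
  -- map integrals
  have mapQ : ∫ x, L (h x) (hstar x) ∂(Q.map Prod.fst)
      = ∫ p, L (h p.1) (hstar p.1) ∂Q :=
    integral_map measurable_fst.aemeasurable mx.aestronglyMeasurable
  have mapP : ∫ x, L (h x) (hstar x) ∂(P.map Prod.fst)
      = ∫ p, L (h p.1) (hstar p.1) ∂P :=
    integral_map measurable_fst.aemeasurable mx.aestronglyMeasurable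
  -- Step A
  have stepA : ∫ p, L (h p.1) p.2 ∂Q
      ≤ (∫ p, L (h p.1) (hstar p.1) ∂Q) + ∫ p, L (hstar p.1) p.2 ∂Q := by
    rw [← integral_add iQhs iQs]
    exact integral_mono iQh (iQhs.add iQs) (fun p => hL_tri _ _ _)
  -- Step C
  have stepC : ∫ p, L (h p.1) (hstar p.1) ∂P
      ≤ (∫ p, L (h p.1) p.2 ∂P) + ∫ p, L (hstar p.1) p.2 ∂P := by
    rw [← integral_add iPh iPs]
    refine integral_mono iPhs (iPh.add iPs) (fun p => ?_)
    calc L (h p.1) (hstar p.1) ≤ L (h p.1) p.2 + L p.2 (hstar p.1) := hL_tri _ _ _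
      _ = L (h p.1) p.2 + L (hstar p.1) p.2 := by rw [hL_symm p.2]
  -- Step B: disc bound
  set D := { r | ∃ h ∈ H, ∃ h' ∈ H,
      r = |(∫ x, L (h x) (h' x) ∂(Q.map Prod.fst)) - ∫ x, L (h x) (h' x) ∂(P.map Prod.fst)| }
  have hbdd : BddAbove D := by
    refine ⟨M, fun r hr => ?_⟩
    obtain ⟨f, hf, g, hg, rfl⟩ := hr
    have mfg : Measurable (fun x => L (f x) (g x)) :=
      aux_meas L _ _ (hH_meas f hf) (hH_meas g hg)
    have bQ := aux_int_bounds (Q.map Prod.fst) _ mfg M (fun z => hL_nonneg _ _) (fun z => hL_bdd _ _)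
    have bP := aux_int_bounds (P.map Prod.fst) _ mfg M (fun z => hL_nonneg _ _) (fun z => hL_bdd _ _)
    rw [abs_sub_le_iff]
    constructor <;> linarith [bQ.1, bQ.2, bP.1, bP.2]
  have stepB : (∫ p, L (h p.1) (hstar p.1) ∂Q)
      ≤ (∫ p, L (h p.1) (hstar p.1) ∂P) + sSup D := by
    have hin : |(∫ x, L (h x) (hstar x) ∂(Q.map Prod.fst))
        - ∫ x, L (h x) (hstar x) ∂(P.map Prod.fst)| ∈ D :=
      ⟨h, hh, hstar, hhstar, rfl⟩
    have := le_csSup hbdd hin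
    rw [mapQ, mapP] at this
    have h2 : (∫ p, L (h p.1) (hstar p.1) ∂Q) - (∫ p, L (h p.1) (hstar p.1) ∂P)
        ≤ sSup D := le_trans (le_abs_self _) this
    linarith
  linarith
end

section
/- (Closed-set unsupervised domain adaptation bound.) Let P (source) and Q (target) be probability measures on X × Y, let H be a nonempty set of measurable hypotheses, and let the loss L be nonnegative, bounded, symmetric, and satisfy the triangle inequality. Then for every h ∈ H: R_Q(h) ≤ R_P(h) + disc_H(Q_X, P_X) + λ', where λ' = inf_{h'∈H} (R_Q(h') + R_P(h')) and P_X, Q_X are the marginals on X. -/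
/-!
STATEMENT 5 (Closed-set UDA bound): For probability measures P (source), Q (target) on
X × Y, a nonempty set H of measurable hypotheses, and a nonnegative, bounded, symmetric
loss L satisfying the triangle inequality, for every h ∈ H:
R_Q(h) ≤ R_P(h) + disc_H(Q_X, P_X) + λ', where λ' = inf_{h'∈H} (R_Q(h') + R_P(h')).
-/

open MeasureTheory ProbabilityTheory

lemma aux_integrable {α : Type*} [MeasurableSpace α] (μ : Measure α) [IsFiniteMeasure μ]
    {g : α → ℝ} (hg : Measurable g) {M : ℝ} (h0 : ∀ a, 0 ≤ g a) (hM : ∀ a, g a ≤ M) :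
    Integrable g μ :=
  ⟨hg.aestronglyMeasurable, HasFiniteIntegral.of_bounded (C := M)
    (Filter.Eventually.of_forall fun a => by
      rw [Real.norm_eq_abs, abs_of_nonneg (h0 a)]; exact hM a)⟩

theorem closed_set_uda_bound
    {X : Type*} [MeasurableSpace X] (C : ℕ) (hC : 1 ≤ C)
    (L : Fin (C + 1) → Fin (C + 1) → ℝ) (M : ℝ)
    (hL_nonneg : ∀ a b, 0 ≤ L a b) (hL_bdd : ∀ a b, L a b ≤ M)
    (hL_symm : ∀ a b, L a b = L b a)
    (hL_tri : ∀ a b c, L a c ≤ L a b + L b c)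
    (P Q : Measure (X × Fin (C + 1)))
    [IsProbabilityMeasure P] [IsProbabilityMeasure Q]
    (H : Set (X → Fin (C + 1))) (hH_ne : H.Nonempty)
    (hH_meas : ∀ h ∈ H, Measurable h)
    (h : X → Fin (C + 1)) (hh : h ∈ H) :
    risk L Q h ≤ risk L P h + disc L H (Q.map Prod.fst) (P.map Prod.fst)
      + sInf { r | ∃ h' ∈ H, r = risk L Q h' + risk L P h' } := by
  classical
  have hLmeas : Measurable (fun p : Fin (C+1) × Fin (C+1) => L p.1 p.2) :=
    measurable_of_countable _
  have measL : ∀ f g : X → Fin (C+1), Measurable f → Measurable g →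
      Measurable (fun x => L (f x) (g x)) := fun f g hf hg =>
    hLmeas.comp (hf.prodMk hg)
  have measL2 : ∀ f g : X × Fin (C+1) → Fin (C+1), Measurable f → Measurable g →
      Measurable (fun p => L (f p) (g p)) := fun f g hf hg =>
    hLmeas.comp (hf.prodMk hg)
  haveI : IsProbabilityMeasure (Q.map (Prod.fst : X × Fin (C+1) → X)) :=
    Measure.isProbabilityMeasure_map measurable_fst.aemeasurable
  haveI : IsProbabilityMeasure (P.map (Prod.fst : X × Fin (C+1) → X)) :=
    Measure.isProbabilityMeasure_map measurable_fst.aemeasurable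
  -- integrability of all relevant functions
  have intQ : ∀ f g : X × Fin (C+1) → Fin (C+1), Measurable f → Measurable g →
      Integrable (fun p => L (f p) (g p)) Q := fun f g hf hg =>
    aux_integrable Q (measL2 f g hf hg) (fun p => hL_nonneg _ _) (fun p => hL_bdd _ _)
  have intP : ∀ f g : X × Fin (C+1) → Fin (C+1), Measurable f → Measurable g →
      Integrable (fun p => L (f p) (g p)) P := fun f g hf hg =>
    aux_integrable P (measL2 f g hf hg) (fun p => hL_nonneg _ _) (fun p => hL_bdd _ _)
  -- marginal rewriting
  have map_eq : ∀ (μ : Measure (X × Fin (C+1))), ∀ f g : X → Fin (C+1),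
      Measurable f → Measurable g →
      (∫ x, L (f x) (g x) ∂(μ.map Prod.fst)) = ∫ p, L (f p.1) (g p.1) ∂μ := by
    intro μ f g hf hg
    rw [integral_map measurable_fst.aemeasurable
      (measL f g hf hg).aestronglyMeasurable]
  -- the discrepancy set is bounded above
  have hM0 : 0 ≤ M := le_trans (hL_nonneg 0 0) (hL_bdd 0 0)
  have int_bound : ∀ (μ : Measure X) [IsProbabilityMeasure μ],
      ∀ f g : X → Fin (C+1), Measurable f → Measurable g →
      |∫ x, L (f x) (g x) ∂μ| ≤ M := by
    intro μ hμ f g hf hg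
    have hint := aux_integrable μ (measL f g hf hg)
      (fun x => hL_nonneg _ _) (fun x => hL_bdd _ _)
    rw [abs_of_nonneg (integral_nonneg fun x => hL_nonneg _ _)]
    calc ∫ x, L (f x) (g x) ∂μ ≤ ∫ _x, M ∂μ :=
          integral_mono hint (integrable_const M) (fun x => hL_bdd _ _)
      _ = M := by simp
  have hDbdd : BddAbove { r | ∃ h₁ ∈ H, ∃ h₂ ∈ H,
      r = |(∫ x, L (h₁ x) (h₂ x) ∂(Q.map Prod.fst)) -
        ∫ x, L (h₁ x) (h₂ x) ∂(P.map Prod.fst)| } := by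
    refine ⟨2 * M, ?_⟩
    rintro r ⟨h₁, hh₁, h₂, hh₂, rfl⟩
    calc |(∫ x, L (h₁ x) (h₂ x) ∂(Q.map Prod.fst)) -
          ∫ x, L (h₁ x) (h₂ x) ∂(P.map Prod.fst)|
        ≤ |∫ x, L (h₁ x) (h₂ x) ∂(Q.map Prod.fst)| +
          |∫ x, L (h₁ x) (h₂ x) ∂(P.map Prod.fst)| := abs_sub _ _
      _ ≤ M + M := add_le_add
          (int_bound _ _ _ (hH_meas _ hh₁) (hH_meas _ hh₂))
          (int_bound _ _ _ (hH_meas _ hh₁) (hH_meas _ hh₂))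
      _ = 2 * M := by ring
  -- the key estimate for each h' ∈ H
  have key : ∀ h' ∈ H, risk L Q h ≤ risk L P h +
      disc L H (Q.map Prod.fst) (P.map Prod.fst) + (risk L Q h' + risk L P h') := by
    intro h' hh'
    have hhm := hH_meas h hh
    have hh'm := hH_meas h' hh'
    set AQ := ∫ x, L (h x) (h' x) ∂(Q.map Prod.fst) with hAQ
    set AP := ∫ x, L (h x) (h' x) ∂(P.map Prod.fst) with hAP
    -- step 1 : risk Q h ≤ AQ + risk Q h'
    have step1 : risk L Q h ≤ AQ + risk L Q h' := by
      rw [hAQ, map_eq Q h h' hhm hh'm, risk, risk,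
        ← integral_add (intQ (fun p => h p.1) (fun p => h' p.1) (hhm.comp measurable_fst) (hh'm.comp measurable_fst))
          (intQ (fun p => h' p.1) (fun p => p.2) (hh'm.comp measurable_fst) measurable_snd)]
      exact integral_mono (intQ (fun p => h p.1) (fun p => p.2) (hhm.comp measurable_fst) measurable_snd)
        ((intQ (fun p => h p.1) (fun p => h' p.1) (hhm.comp measurable_fst) (hh'm.comp measurable_fst)).add
          (intQ (fun p => h' p.1) (fun p => p.2) (hh'm.comp measurable_fst) measurable_snd))
        (fun p => hL_tri _ _ _)
    -- step 2 : AQ ≤ AP + disc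
    have step2 : AQ ≤ AP + disc L H (Q.map Prod.fst) (P.map Prod.fst) := by
      have hmem : |AQ - AP| ∈ { r | ∃ h₁ ∈ H, ∃ h₂ ∈ H,
          r = |(∫ x, L (h₁ x) (h₂ x) ∂(Q.map Prod.fst)) -
            ∫ x, L (h₁ x) (h₂ x) ∂(P.map Prod.fst)| } :=
        ⟨h, hh, h', hh', rfl⟩
      have := le_csSup hDbdd hmem
      have habs : AQ - AP ≤ |AQ - AP| := le_abs_self _
      unfold disc
      linarith
    -- step 3 : AP ≤ risk P h + risk P h'
    have step3 : AP ≤ risk L P h + risk L P h' := by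
      rw [hAP, map_eq P h h' hhm hh'm, risk, risk]
      have hre : (fun p : X × Fin (C+1) => L (h' p.1) p.2) =
          fun p => L p.2 (h' p.1) := by
        funext p; exact hL_symm _ _
      rw [hre, ← integral_add (intP (fun p => h p.1) (fun p => p.2) (hhm.comp measurable_fst) measurable_snd)
        (intP (fun p => p.2) (fun p => h' p.1) measurable_snd (hh'm.comp measurable_fst))]
      exact integral_mono (intP (fun p => h p.1) (fun p => h' p.1) (hhm.comp measurable_fst) (hh'm.comp measurable_fst))
        ((intP (fun p => h p.1) (fun p => p.2) (hhm.comp measurable_fst) measurable_snd).add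
          (intP (fun p => p.2) (fun p => h' p.1) measurable_snd (hh'm.comp measurable_fst)))
        (fun p => hL_tri _ _ _)
    linarith
  -- conclude via sInf
  obtain ⟨h₀, hh₀⟩ := hH_ne
  have hSne : { r | ∃ h' ∈ H, r = risk L Q h' + risk L P h' }.Nonempty :=
    ⟨_, h₀, hh₀, rfl⟩
  have hlb : risk L Q h - risk L P h - disc L H (Q.map Prod.fst) (P.map Prod.fst)
      ≤ sInf { r | ∃ h' ∈ H, r = risk L Q h' + risk L P h' } := by
    apply le_csInf hSne
    rintro r ⟨h', hh', rfl⟩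
    have := key h' hh'
    linarith
  linarith
end

section
/- (Open-set domain adaptation upper bound, Theorem 1.) Let P (source) and Q (target) be probability measures on X × Y such that P assigns zero mass to the unknown label C+1 and the target unknown-class prior π = π_{C+1}^Q satisfies π < 1. Let H be a set of measurable hypotheses containing the constant function x ↦ C+1, and let the loss L be nonnegative, bounded, symmetric, and satisfy the triangle inequality. Then for every h ∈ H: R_Q(h)/(1−π) ≤ R_P(h) + disc_H(Q_{X|Y≤C}, P_X) + λ + (π/(1−π)) · R_{Q,C+1}(h), where Q_{X|Y≤C} is the marginal on X of Q conditioned on the event {y ≤ C}, R*_Q(h') = E_{(x,y)∼Q}[L(h'(x),y) · 1{y ≤ C}], and λ = inf_{h'∈H} [ R*_Q(h')/(1−π) + R_P(h') ]. -/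
/-!
STATEMENT 6 (Open-set domain adaptation upper bound, Theorem 1): Y = {1,…,C+1} is
modeled as `Fin (C+1)` with the unknown class C+1 modeled as `Fin.last C`. P assigns
zero mass to the unknown label, π = π_{C+1}^Q < 1, H contains the constant function
x ↦ C+1, and L is nonnegative, bounded, symmetric, and satisfies the triangle
inequality. Then for every h ∈ H:
R_Q(h)/(1−π) ≤ R_P(h) + disc_H(Q_{X|Y≤C}, P_X) + λ + (π/(1−π))·R_{Q,C+1}(h),
where λ = inf_{h'∈H} [ R*_Q(h')/(1−π) + R_P(h') ].
-/

open MeasureTheory ProbabilityTheory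

/-- Partial risk `R_{μ,i}(h) = E_{x ∼ μ(·|y=i)} L(h(x), i)`. -/
noncomputable def partialRisk {X : Type*} [MeasurableSpace X] {n : ℕ}
    (L : Fin n → Fin n → ℝ) (μ : Measure (X × Fin n)) (h : X → Fin n) (i : Fin n) : ℝ :=
  ∫ p, L (h p.1) i ∂(ProbabilityTheory.cond μ {p | p.2 = i})

/-- Restricted known-class risk `R*_Q(h) = E_{(x,y)∼Q}[L(h(x),y) · 1{y ≤ C}]`. -/
noncomputable def knownRisk {X : Type*} [MeasurableSpace X] {C : ℕ}
    (L : Fin (C + 1) → Fin (C + 1) → ℝ) (Q : Measure (X × Fin (C + 1)))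
    (h : X → Fin (C + 1)) : ℝ :=
  ∫ p, Set.indicator {p : X × Fin (C + 1) | p.2 ≠ Fin.last C}
    (fun p => L (h p.1) p.2) p ∂Q

private lemma measL {X : Type*} [MeasurableSpace X] {n : ℕ} (L : Fin n → Fin n → ℝ)
    {g g' : X → Fin n} (mg : Measurable g) (mg' : Measurable g') :
    Measurable fun x => L (g x) (g' x) :=
  (measurable_of_countable (fun q : Fin n × Fin n => L q.1 q.2)).comp (mg.prodMk mg')

private lemma intL {α : Type*} [MeasurableSpace α] (μ : Measure α) [IsFiniteMeasure μ]
    {f : α → ℝ} (mf : Measurable f) {M : ℝ} (h0 : ∀ a, 0 ≤ f a) (hb : ∀ a, f a ≤ M) :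
    Integrable f μ :=
  (integrable_const M).mono' mf.aestronglyMeasurable
    (ae_of_all _ fun a => by rw [Real.norm_eq_abs, abs_of_nonneg (h0 a)]; exact hb a)

theorem open_set_domain_adaptation_upper_bound
    {X : Type*} [MeasurableSpace X] (C : ℕ) (hC : 1 ≤ C)
    (L : Fin (C + 1) → Fin (C + 1) → ℝ) (M : ℝ)
    (hL_nonneg : ∀ a b, 0 ≤ L a b) (hL_bdd : ∀ a b, L a b ≤ M)
    (hL_symm : ∀ a b, L a b = L b a)
    (hL_tri : ∀ a b c, L a c ≤ L a b + L b c)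
    (P Q : Measure (X × Fin (C + 1)))
    [IsProbabilityMeasure P] [IsProbabilityMeasure Q]
    (hP_unk : P {p | p.2 = Fin.last C} = 0)
    (π : ℝ) (hπ_def : π = (Q {p | p.2 = Fin.last C}).toReal) (hπ : π < 1)
    (H : Set (X → Fin (C + 1))) (hH_meas : ∀ h ∈ H, Measurable h)
    (hH_const : (fun _ : X => Fin.last C) ∈ H)
    (h : X → Fin (C + 1)) (hh : h ∈ H) :
    risk L Q h / (1 - π) ≤
      risk L P h
      + disc L H
          ((ProbabilityTheory.cond Q {p | p.2 ≠ Fin.last C}).map Prod.fst)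
          (P.map Prod.fst)
      + sInf { r | ∃ h' ∈ H, r = knownRisk L Q h' / (1 - π) + risk L P h' }
      + (π / (1 - π)) * partialRisk L Q h (Fin.last C) := by
  have mh : Measurable h := hH_meas h hh
  set A : Set (X × Fin (C + 1)) := {p | p.2 = Fin.last C} with hA_def
  have hset : {p : X × Fin (C + 1) | p.2 ≠ Fin.last C} = Aᶜ := rfl
  rw [hset]
  have hA : MeasurableSet A := (measurableSet_singleton (Fin.last C)).preimage measurable_snd
  have hπ0 : 0 ≤ π := hπ_def ▸ ENNReal.toReal_nonneg
  have h1π : 0 < 1 - π := by linarith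
  have hM0 : (0 : ℝ) ≤ M := le_trans (hL_nonneg 0 0) (hL_bdd 0 0)
  have hQAc_toReal : (Q Aᶜ).toReal = 1 - π := by
    rw [prob_compl_eq_one_sub hA,
      ENNReal.toReal_sub_of_le prob_le_one (by simp), ENNReal.toReal_one, hπ_def]
  have hQAc_ne : Q Aᶜ ≠ 0 := by
    intro h0
    rw [h0] at hQAc_toReal
    simp at hQAc_toReal
    linarith
  haveI hQcond : IsProbabilityMeasure (ProbabilityTheory.cond Q Aᶜ) :=
    cond_isProbabilityMeasure hQAc_ne
  set ν : Measure X := (ProbabilityTheory.cond Q Aᶜ).map Prod.fst with hν_def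
  set ν' : Measure X := P.map Prod.fst with hν'_def
  haveI : IsProbabilityMeasure ν := Measure.isProbabilityMeasure_map measurable_fst.aemeasurable
  haveI : IsProbabilityMeasure ν' := Measure.isProbabilityMeasure_map measurable_fst.aemeasurable
  set D : ℝ := disc L H ν ν' with hD_def
  -- integral over cond Q Aᶜ
  have hcondint : ∀ f : X × Fin (C + 1) → ℝ,
      ∫ p, f p ∂(ProbabilityTheory.cond Q Aᶜ) = (1 - π)⁻¹ * ∫ p in Aᶜ, f p ∂Q := by
    intro f
    rw [show ProbabilityTheory.cond Q Aᶜ = (Q Aᶜ)⁻¹ • Q.restrict Aᶜ from rfl,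
      integral_smul_measure, ENNReal.toReal_inv, hQAc_toReal, smul_eq_mul]
  -- marginal integrals
  have hmap : ∀ (μ : Measure (X × Fin (C + 1))) (g : X → ℝ), Measurable g →
      ∫ x, g x ∂(μ.map Prod.fst) = ∫ p, g p.1 ∂μ := fun μ g mg =>
    integral_map measurable_fst.aemeasurable mg.aestronglyMeasurable
  -- knownRisk as a set integral
  have hkn : ∀ g : X → Fin (C + 1),
      knownRisk L Q g = ∫ p in Aᶜ, L (g p.1) p.2 ∂Q := fun g =>
    integral_indicator hA.compl
  -- splitting the target risk
  have hfQ : Integrable (fun p : X × Fin (C + 1) => L (h p.1) p.2) Q :=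
    intL Q (measL L (mh.comp measurable_fst) measurable_snd)
      (fun a => hL_nonneg _ _) (fun a => hL_bdd _ _)
  have hsplit : risk L Q h =
      (∫ p in A, L (h p.1) p.2 ∂Q) + ∫ p in Aᶜ, L (h p.1) p.2 ∂Q :=
    (integral_add_compl hA hfQ).symm
  have hAeq : ∫ p in A, L (h p.1) p.2 ∂Q = π * partialRisk L Q h (Fin.last C) := by
    have e1 : ∫ p in A, L (h p.1) p.2 ∂Q = ∫ p in A, L (h p.1) (Fin.last C) ∂Q :=
      setIntegral_congr_fun hA (fun p hp => by
        simp only [hA_def, Set.mem_setOf_eq] at hp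
        rw [hp])
    have e2 : partialRisk L Q h (Fin.last C) =
        ((Q A)⁻¹).toReal • ∫ p in A, L (h p.1) (Fin.last C) ∂Q :=
      integral_smul_measure _ _
    rw [e1, e2, hπ_def, ENNReal.toReal_inv, smul_eq_mul]
    by_cases hQA : Q A = 0
    · rw [hQA, Measure.restrict_eq_zero.mpr hQA]
      simp
    · have ht : (Q A).toReal ≠ 0 :=
        ENNReal.toReal_ne_zero.mpr ⟨hQA, measure_ne_top _ _⟩
      field_simp
  -- boundedness of the disc set
  have hintbd : ∀ (μ : Measure X), IsProbabilityMeasure μ → ∀ g ∈ H, ∀ g' ∈ H,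
      0 ≤ (∫ x, L (g x) (g' x) ∂μ) ∧ (∫ x, L (g x) (g' x) ∂μ) ≤ M := by
    intro μ hμ g hg g' hg'
    refine ⟨integral_nonneg fun x => hL_nonneg _ _, ?_⟩
    calc (∫ x, L (g x) (g' x) ∂μ) ≤ ∫ _x, M ∂μ :=
          integral_mono
            (intL μ (measL L (hH_meas g hg) (hH_meas g' hg'))
              (fun a => hL_nonneg _ _) (fun a => hL_bdd _ _))
            (integrable_const M) (fun x => hL_bdd _ _)
      _ = M := by simp
  have hbdd : BddAbove { r | ∃ g ∈ H, ∃ g' ∈ H,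
      r = |(∫ x, L (g x) (g' x) ∂ν) - ∫ x, L (g x) (g' x) ∂ν'| } := by
    refine ⟨M, ?_⟩
    rintro r ⟨g, hg, g', hg', rfl⟩
    obtain ⟨h1, h2⟩ := hintbd ν inferInstance g hg g' hg'
    obtain ⟨h3, h4⟩ := hintbd ν' inferInstance g hg g' hg'
    exact abs_le.mpr ⟨by linarith, by linarith⟩
  -- the key inequality for each competitor h'
  have key : ∀ h' ∈ H, knownRisk L Q h / (1 - π) ≤
      risk L P h + D + (knownRisk L Q h' / (1 - π) + risk L P h') := by
    intro h' hh'
    have mh' : Measurable h' := hH_meas h' hh'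
    -- step 1 : triangle inequality under Q restricted to Aᶜ
    have int1 : Integrable (fun p : X × Fin (C + 1) => L (h p.1) p.2) (Q.restrict Aᶜ) :=
      intL _ (measL L (mh.comp measurable_fst) measurable_snd)
        (fun a => hL_nonneg _ _) (fun a => hL_bdd _ _)
    have int2 : Integrable (fun p : X × Fin (C + 1) => L (h p.1) (h' p.1)) (Q.restrict Aᶜ) :=
      intL _ (measL L (mh.comp measurable_fst) (mh'.comp measurable_fst))
        (fun a => hL_nonneg _ _) (fun a => hL_bdd _ _)
    have int3 : Integrable (fun p : X × Fin (C + 1) => L (h' p.1) p.2) (Q.restrict Aᶜ) :=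
      intL _ (measL L (mh'.comp measurable_fst) measurable_snd)
        (fun a => hL_nonneg _ _) (fun a => hL_bdd _ _)
    have step1 : knownRisk L Q h ≤
        (∫ p in Aᶜ, L (h p.1) (h' p.1) ∂Q) + knownRisk L Q h' := by
      rw [hkn h, hkn h']
      calc (∫ p in Aᶜ, L (h p.1) p.2 ∂Q)
          ≤ ∫ p in Aᶜ, (L (h p.1) (h' p.1) + L (h' p.1) p.2) ∂Q :=
            integral_mono int1 (int2.add int3) (fun p => hL_tri _ _ _)
        _ = (∫ p in Aᶜ, L (h p.1) (h' p.1) ∂Q) + ∫ p in Aᶜ, L (h' p.1) p.2 ∂Q :=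
            integral_add int2 int3
    -- step 2 : relate to the conditional marginal
    have step2 : ∫ p in Aᶜ, L (h p.1) (h' p.1) ∂Q =
        (1 - π) * ∫ x, L (h x) (h' x) ∂ν := by
      rw [hν_def, hmap _ _ (measL L mh mh'), hcondint]
      field_simp
    -- step 3 : discrepancy bound
    have step3 : (∫ x, L (h x) (h' x) ∂ν) ≤ (∫ x, L (h x) (h' x) ∂ν') + D := by
      have hmem : |(∫ x, L (h x) (h' x) ∂ν) - ∫ x, L (h x) (h' x) ∂ν'| ∈
          { r | ∃ g ∈ H, ∃ g' ∈ H,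
            r = |(∫ x, L (g x) (g' x) ∂ν) - ∫ x, L (g x) (g' x) ∂ν'| } :=
        ⟨h, hh, h', hh', rfl⟩
      have := le_csSup hbdd hmem
      have habs := le_trans (le_abs_self _) this
      rw [hD_def]
      unfold disc
      linarith
    -- step 4 : triangle inequality under P
    have step4 : (∫ x, L (h x) (h' x) ∂ν') ≤ risk L P h + risk L P h' := by
      have intP1 : Integrable (fun p : X × Fin (C + 1) => L (h p.1) p.2) P :=
        intL _ (measL L (mh.comp measurable_fst) measurable_snd)
          (fun a => hL_nonneg _ _) (fun a => hL_bdd _ _)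
      have intP2 : Integrable (fun p : X × Fin (C + 1) => L p.2 (h' p.1)) P :=
        intL _ (measL L measurable_snd (mh'.comp measurable_fst))
          (fun a => hL_nonneg _ _) (fun a => hL_bdd _ _)
      rw [hν'_def, hmap P _ (measL L mh mh')]
      have e3 : (∫ p, L p.2 (h' p.1) ∂P) = risk L P h' :=
        integral_congr_ae (ae_of_all _ fun p => hL_symm _ _)
      calc (∫ p, L (h p.1) (h' p.1) ∂P)
          ≤ ∫ p, (L (h p.1) p.2 + L p.2 (h' p.1)) ∂P :=
            integral_mono
              (intL _ (measL L (mh.comp measurable_fst) (mh'.comp measurable_fst))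
                (fun a => hL_nonneg _ _) (fun a => hL_bdd _ _))
              (intP1.add intP2) (fun p => hL_tri _ _ _)
        _ = (∫ p, L (h p.1) p.2 ∂P) + ∫ p, L p.2 (h' p.1) ∂P := integral_add intP1 intP2
        _ = risk L P h + risk L P h' := by rw [e3]; rfl
    -- assemble
    have hdiv : knownRisk L Q h / (1 - π) ≤
        (∫ x, L (h x) (h' x) ∂ν) + knownRisk L Q h' / (1 - π) := by
      have h1 : knownRisk L Q h ≤ (1 - π) * (∫ x, L (h x) (h' x) ∂ν) + knownRisk L Q h' := by
        rw [← step2]; exact step1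
      calc knownRisk L Q h / (1 - π)
          ≤ ((1 - π) * (∫ x, L (h x) (h' x) ∂ν) + knownRisk L Q h') / (1 - π) := by
            gcongr
        _ = (∫ x, L (h x) (h' x) ∂ν) + knownRisk L Q h' / (1 - π) := by
            field_simp
    linarith
  -- infimum step
  have hSne : { r | ∃ h' ∈ H, r = knownRisk L Q h' / (1 - π) + risk L P h' }.Nonempty :=
    ⟨_, h, hh, rfl⟩
  have hInf : knownRisk L Q h / (1 - π) - risk L P h - D ≤
      sInf { r | ∃ h' ∈ H, r = knownRisk L Q h' / (1 - π) + risk L P h' } := by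
    refine le_csInf hSne ?_
    rintro r ⟨h', hh', rfl⟩
    linarith [key h' hh']
  -- final assembly
  have hfinal : risk L Q h / (1 - π) =
      knownRisk L Q h / (1 - π) + (π / (1 - π)) * partialRisk L Q h (Fin.last C) := by
    rw [hsplit, hAeq, ← hkn h]
    ring
  rw [hfinal]
  linarith [hInf]
end
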